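/- (Mixed estimate.) Let t0 ≤ a ≤ b ≤ d be real numbers, let c : [a,d] → ℝ be of class C² with Λ1 ≤ c(t) ≤ Λ2 for all t ∈ [a,d] (where 0 < Λ1 ≤ Λ2), let c∞ ∈ [Λ1,Λ2], let γ be a continuous non-negative function on [a,b] with |c'(t)| ≤ γ(t) and |c''(t)| ≤ γ(t)² on [a,b], and let λ > 0 satisfy λ ≥ (1/2)|c'(t)|/c(t)^{3/2} for every t ∈ [a,b]. Then every solution u of u''(t) + λ² c(t) u(t) = 0 on [a,d] satisfies, for the Kowaleskian energy E(t) = u'(t)²/√c∞ + λ²√c∞·u(t)², the inequality E(d) ≤ (3Λ2/Λ1)·E(a)·exp( ((2Λ1+3)/(4Λ1^{5/2}))·(1/λ)·∫_a^b γ(τ)² dτ + (λ/Λ1^{1/2})·∫_b^d |c(τ) − c∞| dτ ). -/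

import Mathlib

open Real Set MeasureTheory

/-- The Kowaleskian energy `E(t) = u'(t)²/√c∞ + λ²·√c∞·u(t)²`. -/
noncomputable def kowE (cinf lam : ℝ) (u u' : ℝ → ℝ) (t : ℝ) : ℝ :=
  (u' t) ^ 2 / Real.sqrt cinf + lam ^ 2 * Real.sqrt cinf * (u t) ^ 2

lemma amgm_div (L S U U' : ℝ) (hS : 0 < S) :
    2 * L * |U' * U| ≤ U' ^ 2 / S + L ^ 2 * S * U ^ 2 := by
  have key : 2 * L * |U' * U| * S ≤ U' ^ 2 + L ^ 2 * S ^ 2 * U ^ 2 := by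
    rw [abs_mul]
    have e1 : |U'| ^ 2 = U' ^ 2 := sq_abs U'
    have e2 : (L * S * |U|) ^ 2 = L ^ 2 * S ^ 2 * U ^ 2 := by
      rw [mul_pow, mul_pow, sq_abs]
    nlinarith [sq_nonneg (|U'| - L * S * |U|), e1, e2]
  have h5 : 2 * L * |U' * U| ≤ (U' ^ 2 + L ^ 2 * S ^ 2 * U ^ 2) / S := (le_div_iff₀ hS).2 key
  have h6 : (U' ^ 2 + L ^ 2 * S ^ 2 * U ^ 2) / S = U' ^ 2 / S + L ^ 2 * S * U ^ 2 := by
    field_simp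
  rw [h6] at h5; exact h5

lemma gronwall_aux {x y : ℝ} (hxy : x ≤ y) (F Fd φ : ℝ → ℝ)
    (hF : ∀ t ∈ Icc x y, HasDerivWithinAt F (Fd t) (Icc x y) t)
    (hφ : ContinuousOn φ (Icc x y))
    (hbound : ∀ t ∈ Ioo x y, Fd t ≤ φ t * F t) :
    F y ≤ F x * Real.exp (∫ τ in x..y, φ τ) := by
  rcases eq_or_lt_of_le hxy with rfl | hxy'
  · simp
  set Φ : ℝ → ℝ := fun t => ∫ τ in x..t, φ τ with hΦdef
  have hIntOn : IntegrableOn φ (uIcc x y) := by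
    rw [uIcc_of_le hxy]
    exact hφ.integrableOn_compact isCompact_Icc
  have hΦcont : ContinuousOn Φ (Icc x y) := by
    have h := intervalIntegral.continuousOn_primitive_interval (μ := volume) hIntOn
    rwa [uIcc_of_le hxy] at h
  have hΦderiv : ∀ t ∈ Ioo x y, HasDerivAt Φ (φ t) t := by
    intro t ht
    have h1 : IntervalIntegrable φ volume x t := by
      apply ContinuousOn.intervalIntegrable
      rw [uIcc_of_le ht.1.le]
      exact hφ.mono (Icc_subset_Icc le_rfl ht.2.le)
    have h2 : StronglyMeasurableAtFilter φ (nhds t) :=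
      ContinuousOn.stronglyMeasurableAtFilter isOpen_Ioo (hφ.mono Ioo_subset_Icc_self) t ht
    have h3 : ContinuousAt φ t :=
      (hφ.mono Ioo_subset_Icc_self).continuousAt (Ioo_mem_nhds ht.1 ht.2)
    exact intervalIntegral.integral_hasDerivAt_right h1 h2 h3
  set H : ℝ → ℝ := fun t => F t * Real.exp (-Φ t) with hHdef
  have hFcont : ContinuousOn F (Icc x y) := fun t ht => (hF t ht).continuousWithinAt
  have hHcont : ContinuousOn H (Icc x y) :=
    hFcont.mul ((Real.continuous_exp.comp_continuousOn hΦcont.neg))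
  have hHderiv : ∀ t ∈ Ioo x y, HasDerivAt H ((Fd t - φ t * F t) * Real.exp (-Φ t)) t := by
    intro t ht
    have htm : t ∈ Icc x y := Ioo_subset_Icc_self ht
    have h1 : HasDerivAt F (Fd t) t := (hF t htm).hasDerivAt (Icc_mem_nhds ht.1 ht.2)
    have h2 : HasDerivAt (fun s => Real.exp (-Φ s)) (-φ t * Real.exp (-Φ t)) t := by
      have := ((hΦderiv t ht).neg).exp
      refine this.congr_deriv ?_
      show Real.exp (-Φ t) * -φ t = -φ t * Real.exp (-Φ t)
      ring
    have h3 := h1.mul h2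
    refine h3.congr_deriv ?_
    ring
  have hanti : AntitoneOn H (Icc x y) := by
    apply antitoneOn_of_deriv_nonpos (convex_Icc x y) hHcont
    · intro t ht
      rw [interior_Icc] at ht
      exact (hHderiv t ht).differentiableAt.differentiableWithinAt
    · intro t ht
      rw [interior_Icc] at ht
      rw [(hHderiv t ht).deriv]
      have h1 := hbound t ht
      have h2 : Fd t - φ t * F t ≤ 0 := by linarith
      exact mul_nonpos_of_nonpos_of_nonneg h2 (Real.exp_pos _).le
  have hle := hanti (left_mem_Icc.2 hxy) (right_mem_Icc.2 hxy) hxy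
  have hΦx : Φ x = 0 := intervalIntegral.integral_same
  rw [hHdef] at hle
  simp only [hΦx, neg_zero, Real.exp_zero, mul_one] at hle
  have := mul_le_mul_of_nonneg_right hle (Real.exp_pos (Φ y)).le
  rw [mul_assoc, ← Real.exp_add] at this
  simpa using this

lemma kow_comp (Λ1 Λ2 x y L U U' : ℝ) (h1 : 0 < Λ1) (hx1 : Λ1 ≤ x) (hx2 : x ≤ Λ2)
    (hy1 : Λ1 ≤ y) (hy2 : y ≤ Λ2) :
    U' ^ 2 / Real.sqrt x + L ^ 2 * Real.sqrt x * U ^ 2 ≤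
      Real.sqrt Λ2 / Real.sqrt Λ1 * (U' ^ 2 / Real.sqrt y + L ^ 2 * Real.sqrt y * U ^ 2) := by
  have s1pos : 0 < Real.sqrt Λ1 := Real.sqrt_pos.2 h1
  have sxpos : 0 < Real.sqrt x := Real.sqrt_pos.2 (lt_of_lt_of_le h1 hx1)
  have sypos : 0 < Real.sqrt y := Real.sqrt_pos.2 (lt_of_lt_of_le h1 hy1)
  have hsx1 : Real.sqrt Λ1 ≤ Real.sqrt x := Real.sqrt_le_sqrt hx1
  have hsx2 : Real.sqrt x ≤ Real.sqrt Λ2 := Real.sqrt_le_sqrt hx2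
  have hsy1 : Real.sqrt Λ1 ≤ Real.sqrt y := Real.sqrt_le_sqrt hy1
  have hsy2 : Real.sqrt y ≤ Real.sqrt Λ2 := Real.sqrt_le_sqrt hy2
  have t1 : U' ^ 2 / Real.sqrt x ≤ Real.sqrt Λ2 / Real.sqrt Λ1 * (U' ^ 2 / Real.sqrt y) := by
    have heq : Real.sqrt Λ2 / Real.sqrt Λ1 * (U' ^ 2 / Real.sqrt y) =
        Real.sqrt Λ2 * U' ^ 2 / (Real.sqrt Λ1 * Real.sqrt y) := by ring
    rw [heq, div_le_div_iff₀ sxpos (mul_pos s1pos sypos)]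
    have m1 : Real.sqrt Λ1 * Real.sqrt y ≤ Real.sqrt x * Real.sqrt Λ2 :=
      mul_le_mul hsx1 hsy2 sypos.le sxpos.le
    nlinarith [mul_le_mul_of_nonneg_left m1 (sq_nonneg U')]
  have t2 : L ^ 2 * Real.sqrt x * U ^ 2 ≤
      Real.sqrt Λ2 / Real.sqrt Λ1 * (L ^ 2 * Real.sqrt y * U ^ 2) := by
    rw [div_mul_eq_mul_div, le_div_iff₀ s1pos]
    have m2 : Real.sqrt x * Real.sqrt Λ1 ≤ Real.sqrt Λ2 * Real.sqrt y :=
      mul_le_mul hsx2 hsy1 s1pos.le (Real.sqrt_nonneg _)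
    nlinarith [mul_le_mul_of_nonneg_left m2 (mul_nonneg (sq_nonneg L) (sq_nonneg U))]
  have hdistrib : Real.sqrt Λ2 / Real.sqrt Λ1 *
      (U' ^ 2 / Real.sqrt y + L ^ 2 * Real.sqrt y * U ^ 2) =
      Real.sqrt Λ2 / Real.sqrt Λ1 * (U' ^ 2 / Real.sqrt y) +
      Real.sqrt Λ2 / Real.sqrt Λ1 * (L ^ 2 * Real.sqrt y * U ^ 2) := by ring
  rw [hdistrib]
  linarith

set_option maxHeartbeats 2000000

theorem mixed_estimate
    (t0 a b d Λ1 Λ2 cinf lam : ℝ)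
    (ht0a : t0 ≤ a) (hab : a ≤ b) (hbd : b ≤ d)
    (hΛ1 : 0 < Λ1) (hΛ12 : Λ1 ≤ Λ2) (hcinf : cinf ∈ Icc Λ1 Λ2) (hlam : 0 < lam)
    (c c' c'' γ : ℝ → ℝ)
    (hc1 : ∀ t ∈ Icc a d, HasDerivWithinAt c (c' t) (Icc a d) t)
    (hc2 : ∀ t ∈ Icc a d, HasDerivWithinAt c' (c'' t) (Icc a d) t)
    (hc2cont : ContinuousOn c'' (Icc a d))
    (hbounds : ∀ t ∈ Icc a d, Λ1 ≤ c t ∧ c t ≤ Λ2)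
    (hγ_cont : ContinuousOn γ (Icc a b)) (hγ_nonneg : ∀ t ∈ Icc a b, 0 ≤ γ t)
    (hder : ∀ t ∈ Icc a b, |c' t| ≤ γ t ∧ |c'' t| ≤ (γ t) ^ 2)
    (hlam_ge : ∀ t ∈ Icc a b, (1 / 2) * |c' t| / (c t) ^ ((3 : ℝ) / 2) ≤ lam)
    (u u' : ℝ → ℝ)
    (hu : ∀ t ∈ Icc a d, HasDerivWithinAt u (u' t) (Icc a d) t)
    (hu' : ∀ t ∈ Icc a d, HasDerivWithinAt u' (-(lam ^ 2 * c t * u t)) (Icc a d) t) :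
    kowE cinf lam u u' d ≤
      3 * Λ2 / Λ1 * kowE cinf lam u u' a *
        Real.exp ((2 * Λ1 + 3) / (4 * Λ1 ^ ((5 : ℝ) / 2)) * (1 / lam) *
            (∫ τ in a..b, (γ τ) ^ 2) +
          lam / Real.sqrt Λ1 * ∫ τ in b..d, |c τ - cinf|) := by
  have hsub1 : Icc a b ⊆ Icc a d := Icc_subset_Icc le_rfl hbd
  have hsub2 : Icc b d ⊆ Icc a d := Icc_subset_Icc hab le_rfl
  have ha' : a ∈ Icc a d := ⟨le_rfl, hab.trans hbd⟩
  have hb' : b ∈ Icc a d := ⟨hab, hbd⟩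
  have hamem : a ∈ Icc a b := ⟨le_rfl, hab⟩
  have hbmem : b ∈ Icc a b := ⟨hab, le_rfl⟩
  have hcinfpos : 0 < cinf := lt_of_lt_of_le hΛ1 hcinf.1
  have hsinf : 0 < Real.sqrt cinf := Real.sqrt_pos.2 hcinfpos
  have hslp : 0 < Real.sqrt Λ1 := Real.sqrt_pos.2 hΛ1
  have hcpos : ∀ t ∈ Icc a d, 0 < c t := fun t ht => lt_of_lt_of_le hΛ1 (hbounds t ht).1
  have h52 : Λ1 ^ ((5 : ℝ) / 2) = Λ1 ^ 2 * Real.sqrt Λ1 := by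
    rw [show (5 : ℝ) / 2 = 2 + 1 / 2 by norm_num, Real.rpow_add hΛ1, ← Real.sqrt_eq_rpow,
      Real.rpow_two]
  have hK1pos : 0 < (2 * Λ1 + 3) / (4 * Λ1 ^ ((5 : ℝ) / 2)) := by
    apply div_pos (by linarith)
    have := Real.rpow_pos_of_pos hΛ1 ((5 : ℝ) / 2)
    linarith
  set F : ℝ → ℝ := fun t => u' t ^ 2 / Real.sqrt (c t) + lam ^ 2 * Real.sqrt (c t) * u t ^ 2 +
      1 / 2 * (c' t / (c t * Real.sqrt (c t))) * (u' t * u t) with hFdef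
  set Fd : ℝ → ℝ := fun t => 1 / 2 * (c'' t - 3 / 2 * c' t ^ 2 / c t) / (c t * Real.sqrt (c t)) *
      (u' t * u t) with hFddef
  set Ed : ℝ → ℝ := fun t => lam ^ 2 * (cinf - c t) / Real.sqrt cinf * (2 * (u t * u' t))
    with hEddef
  set φ1 : ℝ → ℝ := fun τ => (2 * Λ1 + 3) / (4 * Λ1 ^ ((5 : ℝ) / 2)) * (1 / lam) * γ τ ^ 2
    with hφ1def
  set φ2 : ℝ → ℝ := fun τ => lam / Real.sqrt Λ1 * |c τ - cinf| with hφ2def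
  -- key pointwise facts on [a, b]
  have hkey : ∀ t ∈ Icc a b,
      |1 / 2 * (c' t / (c t * Real.sqrt (c t))) * (u' t * u t)| ≤ lam * |u' t * u t| ∧
      2 * lam * |u' t * u t| ≤ u' t ^ 2 / Real.sqrt (c t) + lam ^ 2 * Real.sqrt (c t) * u t ^ 2 := by
    intro t ht
    have ht' : t ∈ Icc a d := hsub1 ht
    have hcp : 0 < c t := hcpos t ht'
    have hsp : 0 < Real.sqrt (c t) := Real.sqrt_pos.2 hcp
    constructor
    · rw [abs_mul]
      apply mul_le_mul_of_nonneg_right _ (abs_nonneg _)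
      have hl := hlam_ge t ht
      have h32 : c t ^ ((3 : ℝ) / 2) = c t * Real.sqrt (c t) := by
        rw [show (3 : ℝ) / 2 = 1 + 1 / 2 by norm_num, Real.rpow_add hcp, Real.rpow_one,
          ← Real.sqrt_eq_rpow]
      rw [h32] at hl
      have h12 : |(1 : ℝ) / 2| = 1 / 2 := by norm_num
      have he : |1 / 2 * (c' t / (c t * Real.sqrt (c t)))| =
          1 / 2 * |c' t| / (c t * Real.sqrt (c t)) := by
        rw [abs_mul, h12, abs_div, abs_of_pos (mul_pos hcp hsp)]
        ring
      rw [he]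
      exact hl
    · exact amgm_div lam (Real.sqrt (c t)) (u t) (u' t) hsp
  have hFlb : ∀ t ∈ Icc a b, lam * |u' t * u t| ≤ F t := by
    intro t ht
    obtain ⟨h1, h2⟩ := hkey t ht
    have h3 := neg_abs_le (1 / 2 * (c' t / (c t * Real.sqrt (c t))) * (u' t * u t))
    simp only [hFdef]
    linarith
  -- derivative of the Tarama energy
  have hFderiv : ∀ t ∈ Icc a b, HasDerivWithinAt F (Fd t) (Icc a b) t := by
    intro t ht
    have ht' : t ∈ Icc a d := hsub1 ht
    have hcder := (hc1 t ht').mono hsub1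
    have hc'der := (hc2 t ht').mono hsub1
    have hup := (hu t ht').mono hsub1
    have hu'p := (hu' t ht').mono hsub1
    have hcp : 0 < c t := hcpos t ht'
    have hsp : 0 < Real.sqrt (c t) := Real.sqrt_pos.2 hcp
    have hsne : Real.sqrt (c t) ≠ 0 := ne_of_gt hsp
    have hcne : c t ≠ 0 := ne_of_gt hcp
    have hsqrt : HasDerivWithinAt (fun y => Real.sqrt (c y)) (c' t / (2 * Real.sqrt (c t)))
        (Icc a b) t := hcder.sqrt hcne
    have hcs : HasDerivWithinAt (fun y => c y * Real.sqrt (c y))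
        (c' t * Real.sqrt (c t) + c t * (c' t / (2 * Real.sqrt (c t)))) (Icc a b) t :=
      hcder.mul hsqrt
    have hcsne : c t * Real.sqrt (c t) ≠ 0 := mul_ne_zero hcne hsne
    have h1 := (hu'p.pow 2).div hsqrt hsne
    have h2 := (hsqrt.const_mul (lam ^ 2)).mul (hup.pow 2)
    have h3 := ((hc'der.div hcs hcsne).const_mul (1 / 2 : ℝ)).mul (hu'p.mul hup)
    have h := (h1.add h2).add h3
    simp only [hFdef, hFddef]
    refine h.congr_deriv ?_
    simp only [Pi.pow_apply, Pi.mul_apply, Pi.div_apply]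
    have hs2 : Real.sqrt (c t) ^ 2 = c t := Real.sq_sqrt hcp.le
    set s := Real.sqrt (c t) with hsdef
    rw [← hs2]
    push_cast
    field_simp
    ring
  -- pointwise inequality for the Tarama energy
  have hbF : ∀ t ∈ Icc a b, Fd t ≤ φ1 t * F t := by
    intro t ht
    have ht' : t ∈ Icc a d := hsub1 ht
    obtain ⟨hcl, hcu⟩ := hbounds t ht'
    have hcp : 0 < c t := hcpos t ht'
    have hsp : 0 < Real.sqrt (c t) := Real.sqrt_pos.2 hcp
    have hsl : Real.sqrt Λ1 ≤ Real.sqrt (c t) := Real.sqrt_le_sqrt hcl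
    obtain ⟨hd1, hd2⟩ := hder t ht
    have hγ0 := hγ_nonneg t ht
    have hnum : |c'' t - 3 / 2 * c' t ^ 2 / c t| ≤ γ t ^ 2 + 3 / 2 * (γ t ^ 2 / Λ1) := by
      have h1 : c' t ^ 2 ≤ γ t ^ 2 := by
        have := sq_abs (c' t)
        nlinarith [abs_nonneg (c' t)]
      have h2 : c' t ^ 2 / c t ≤ γ t ^ 2 / Λ1 := div_le_div₀ (by positivity) h1 hΛ1 hcl
      rw [sub_eq_add_neg]
      refine (abs_add_le _ _).trans ?_
      rw [abs_neg]
      have h3 : |3 / 2 * c' t ^ 2 / c t| = 3 / 2 * c' t ^ 2 / c t := by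
        apply abs_of_nonneg
        positivity
      rw [h3]
      have h4 : 3 / 2 * c' t ^ 2 / c t ≤ 3 / 2 * (γ t ^ 2 / Λ1) := by
        have : 3 / 2 * c' t ^ 2 / c t = 3 / 2 * (c' t ^ 2 / c t) := by ring
        rw [this]
        linarith
      linarith
    have hdenom : Λ1 * Real.sqrt Λ1 ≤ c t * Real.sqrt (c t) :=
      mul_le_mul hcl hsl hslp.le hcp.le
    have hcoef2 : |1 / 2 * (c'' t - 3 / 2 * c' t ^ 2 / c t) / (c t * Real.sqrt (c t))| ≤
        (2 * Λ1 + 3) / (4 * Λ1 ^ ((5 : ℝ) / 2)) * γ t ^ 2 := by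
      rw [abs_div, abs_mul, abs_of_pos (mul_pos hcp hsp),
        abs_of_pos (show (0 : ℝ) < 1 / 2 by norm_num)]
      have hstep : 1 / 2 * |c'' t - 3 / 2 * c' t ^ 2 / c t| / (c t * Real.sqrt (c t)) ≤
          1 / 2 * (γ t ^ 2 + 3 / 2 * (γ t ^ 2 / Λ1)) / (Λ1 * Real.sqrt Λ1) :=
        div_le_div₀ (by positivity) (by nlinarith [hnum]) (mul_pos hΛ1 hslp) hdenom
      refine hstep.trans (le_of_eq ?_)
      rw [h52]
      have hsl2 : Real.sqrt Λ1 ^ 2 = Λ1 := Real.sq_sqrt hΛ1.le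
      field_simp
      nlinarith [hsl2]
    have hFl := hFlb t ht
    simp only [hFddef, hφ1def]
    calc 1 / 2 * (c'' t - 3 / 2 * c' t ^ 2 / c t) / (c t * Real.sqrt (c t)) * (u' t * u t)
        ≤ |1 / 2 * (c'' t - 3 / 2 * c' t ^ 2 / c t) / (c t * Real.sqrt (c t)) * (u' t * u t)| :=
          le_abs_self _
      _ = |1 / 2 * (c'' t - 3 / 2 * c' t ^ 2 / c t) / (c t * Real.sqrt (c t))| * |u' t * u t| :=
          abs_mul _ _
      _ ≤ (2 * Λ1 + 3) / (4 * Λ1 ^ ((5 : ℝ) / 2)) * γ t ^ 2 * |u' t * u t| :=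
          mul_le_mul_of_nonneg_right hcoef2 (abs_nonneg _)
      _ ≤ (2 * Λ1 + 3) / (4 * Λ1 ^ ((5 : ℝ) / 2)) * γ t ^ 2 * (F t / lam) := by
          apply mul_le_mul_of_nonneg_left _ (by positivity)
          rw [le_div_iff₀ hlam]
          nlinarith [hFl]
      _ = (2 * Λ1 + 3) / (4 * Λ1 ^ ((5 : ℝ) / 2)) * (1 / lam) * γ t ^ 2 * F t := by
          field_simp
  -- continuity of φ1
  have hφ1cont : ContinuousOn φ1 (Icc a b) := by
    simp only [hφ1def]
    exact continuousOn_const.mul (hγ_cont.pow 2)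
  -- Gronwall on [a, b]
  have hgron1 : F b ≤ F a * Real.exp (∫ τ in a..b, φ1 τ) :=
    gronwall_aux hab F Fd φ1 hFderiv hφ1cont (fun t ht => hbF t (Ioo_subset_Icc_self ht))
  -- derivative of the Kowaleskian energy on [b, d]
  have hEderiv : ∀ t ∈ Icc b d, HasDerivWithinAt (kowE cinf lam u u') (Ed t) (Icc b d) t := by
    intro t ht
    have ht' : t ∈ Icc a d := hsub2 ht
    have hup := (hu t ht').mono hsub2
    have hu'p := (hu' t ht').mono hsub2
    have h1 := (hu'p.pow 2).div_const (Real.sqrt cinf)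
    have h2 := (hup.pow 2).const_mul (lam ^ 2 * Real.sqrt cinf)
    have h3 := h1.add h2
    have hkw : kowE cinf lam u u' = fun t =>
        u' t ^ 2 / Real.sqrt cinf + lam ^ 2 * Real.sqrt cinf * u t ^ 2 := rfl
    rw [hkw, hEddef]
    refine h3.congr_deriv ?_
    have hs2 : Real.sqrt cinf ^ 2 = cinf := Real.sq_sqrt hcinfpos.le
    set s := Real.sqrt cinf with hsdef
    rw [← hs2]
    push_cast
    field_simp
    ring
  -- pointwise inequality for the Kowaleskian energy
  have hbE : ∀ t ∈ Icc b d, Ed t ≤ φ2 t * kowE cinf lam u u' t := by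
    intro t ht
    have ht' : t ∈ Icc a d := hsub2 ht
    obtain ⟨hcl, hcu⟩ := hbounds t ht'
    have hE0 : 0 ≤ kowE cinf lam u u' t := by
      unfold kowE
      positivity
    have ham : 2 * lam * |u' t * u t| ≤ kowE cinf lam u u' t :=
      amgm_div lam (Real.sqrt cinf) (u t) (u' t) hsinf
    have hsli : Real.sqrt Λ1 ≤ Real.sqrt cinf := Real.sqrt_le_sqrt hcinf.1
    simp only [hEddef, hφ2def]
    have key : lam ^ 2 * (cinf - c t) / Real.sqrt cinf * (2 * (u t * u' t)) ≤
        lam ^ 2 * |c t - cinf| / Real.sqrt cinf * (2 * |u' t * u t|) := by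
      have h1 : (cinf - c t) * (2 * (u t * u' t)) ≤ |c t - cinf| * (2 * |u' t * u t|) := by
        calc (cinf - c t) * (2 * (u t * u' t)) ≤ |(cinf - c t) * (2 * (u t * u' t))| :=
              le_abs_self _
          _ = |c t - cinf| * (2 * |u' t * u t|) := by
              rw [abs_mul, abs_sub_comm, abs_mul, abs_two, mul_comm (u t) (u' t)]
        -- done
      have h2 := mul_le_mul_of_nonneg_left h1 (show 0 ≤ lam ^ 2 / Real.sqrt cinf by positivity)
      calc lam ^ 2 * (cinf - c t) / Real.sqrt cinf * (2 * (u t * u' t))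
          = lam ^ 2 / Real.sqrt cinf * ((cinf - c t) * (2 * (u t * u' t))) := by ring
        _ ≤ lam ^ 2 / Real.sqrt cinf * (|c t - cinf| * (2 * |u' t * u t|)) := h2
        _ = lam ^ 2 * |c t - cinf| / Real.sqrt cinf * (2 * |u' t * u t|) := by ring
    refine key.trans ?_
    have h3 : 2 * |u' t * u t| ≤ kowE cinf lam u u' t / lam := by
      rw [le_div_iff₀ hlam]
      nlinarith [ham]
    calc lam ^ 2 * |c t - cinf| / Real.sqrt cinf * (2 * |u' t * u t|)
        ≤ lam ^ 2 * |c t - cinf| / Real.sqrt cinf * (kowE cinf lam u u' t / lam) :=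
          mul_le_mul_of_nonneg_left h3 (by positivity)
      _ = lam * |c t - cinf| / Real.sqrt cinf * kowE cinf lam u u' t := by
          field_simp
      _ ≤ lam / Real.sqrt Λ1 * |c t - cinf| * kowE cinf lam u u' t := by
          apply mul_le_mul_of_nonneg_right _ hE0
          rw [div_mul_eq_mul_div, div_le_div_iff₀ hsinf hslp]
          have : 0 ≤ lam * |c t - cinf| := by positivity
          nlinarith [hsli]
  -- continuity of φ2
  have hφ2cont : ContinuousOn φ2 (Icc b d) := by
    simp only [hφ2def]
    have hccont : ContinuousOn c (Icc b d) := fun t ht =>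
      ((hc1 t (hsub2 ht)).mono hsub2).continuousWithinAt
    exact continuousOn_const.mul ((hccont.sub continuousOn_const).abs)
  -- Gronwall on [b, d]
  have hgron2 : kowE cinf lam u u' d ≤
      kowE cinf lam u u' b * Real.exp (∫ τ in b..d, φ2 τ) :=
    gronwall_aux hbd (kowE cinf lam u u') Ed φ2 hEderiv hφ2cont
      (fun t ht => hbE t (Ioo_subset_Icc_self ht))
  -- comparisons at the endpoints
  set r : ℝ := Real.sqrt Λ2 / Real.sqrt Λ1 with hrdef
  have hrpos : 0 < r := div_pos (Real.sqrt_pos.2 (lt_of_lt_of_le hΛ1 hΛ12)) hslp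
  have hEbGb : kowE cinf lam u u' b ≤
      r * (u' b ^ 2 / Real.sqrt (c b) + lam ^ 2 * Real.sqrt (c b) * u b ^ 2) :=
    kow_comp Λ1 Λ2 cinf (c b) lam (u b) (u' b) hΛ1 hcinf.1 hcinf.2 (hbounds b hb').1
      (hbounds b hb').2
  have hGaEa : u' a ^ 2 / Real.sqrt (c a) + lam ^ 2 * Real.sqrt (c a) * u a ^ 2 ≤
      r * kowE cinf lam u u' a :=
    kow_comp Λ1 Λ2 (c a) cinf lam (u a) (u' a) hΛ1 (hbounds a ha').1 (hbounds a ha').2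
      hcinf.1 hcinf.2
  have hGb2F : u' b ^ 2 / Real.sqrt (c b) + lam ^ 2 * Real.sqrt (c b) * u b ^ 2 ≤ 2 * F b := by
    obtain ⟨h1, h2⟩ := hkey b hbmem
    have h3 := neg_abs_le (1 / 2 * (c' b / (c b * Real.sqrt (c b))) * (u' b * u b))
    simp only [hFdef]
    linarith
  have hFa32 : F a ≤
      3 / 2 * (u' a ^ 2 / Real.sqrt (c a) + lam ^ 2 * Real.sqrt (c a) * u a ^ 2) := by
    obtain ⟨h1, h2⟩ := hkey a hamem
    have h3 := le_abs_self (1 / 2 * (c' a / (c a * Real.sqrt (c a))) * (u' a * u a))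
    simp only [hFdef]
    linarith
  -- assemble
  have hP : (0 : ℝ) < Real.exp (∫ τ in a..b, φ1 τ) := Real.exp_pos _
  have hQ : (0 : ℝ) < Real.exp (∫ τ in b..d, φ2 τ) := Real.exp_pos _
  have hr2 : r * r = Λ2 / Λ1 := by
    rw [hrdef, div_mul_div_comm, Real.mul_self_sqrt (hΛ1.le.trans hΛ12),
      Real.mul_self_sqrt hΛ1.le]
  have hI1 : ∫ τ in a..b, φ1 τ =
      (2 * Λ1 + 3) / (4 * Λ1 ^ ((5 : ℝ) / 2)) * (1 / lam) * ∫ τ in a..b, γ τ ^ 2 := by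
    simp only [hφ1def]
    rw [intervalIntegral.integral_const_mul]
  have hI2 : ∫ τ in b..d, φ2 τ = lam / Real.sqrt Λ1 * ∫ τ in b..d, |c τ - cinf| := by
    simp only [hφ2def]
    rw [intervalIntegral.integral_const_mul]
  have hFa' : F a ≤ 3 / 2 * (r * kowE cinf lam u u' a) := by
    refine hFa32.trans ?_
    have := mul_le_mul_of_nonneg_left hGaEa (show (0 : ℝ) ≤ 3 / 2 by norm_num)
    linarith
  calc kowE cinf lam u u' d
      ≤ kowE cinf lam u u' b * Real.exp (∫ τ in b..d, φ2 τ) := hgron2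
    _ ≤ (r * (2 * F b)) * Real.exp (∫ τ in b..d, φ2 τ) := by
        apply mul_le_mul_of_nonneg_right _ hQ.le
        refine hEbGb.trans ?_
        exact mul_le_mul_of_nonneg_left hGb2F hrpos.le
    _ ≤ (r * (2 * (F a * Real.exp (∫ τ in a..b, φ1 τ)))) * Real.exp (∫ τ in b..d, φ2 τ) := by
        apply mul_le_mul_of_nonneg_right _ hQ.le
        apply mul_le_mul_of_nonneg_left _ hrpos.le
        linarith [hgron1]
    _ ≤ (r * (2 * ((3 / 2 * (r * kowE cinf lam u u' a)) * Real.exp (∫ τ in a..b, φ1 τ)))) *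
          Real.exp (∫ τ in b..d, φ2 τ) := by
        apply mul_le_mul_of_nonneg_right _ hQ.le
        apply mul_le_mul_of_nonneg_left _ hrpos.le
        have := mul_le_mul_of_nonneg_right hFa' hP.le
        linarith
    _ = 3 * (r * r) * kowE cinf lam u u' a *
          (Real.exp (∫ τ in a..b, φ1 τ) * Real.exp (∫ τ in b..d, φ2 τ)) := by ring
    _ = 3 * Λ2 / Λ1 * kowE cinf lam u u' a *
          Real.exp ((2 * Λ1 + 3) / (4 * Λ1 ^ ((5 : ℝ) / 2)) * (1 / lam) *
              (∫ τ in a..b, (γ τ) ^ 2) +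
            lam / Real.sqrt Λ1 * ∫ τ in b..d, |c τ - cinf|) := by
        rw [hr2, ← Real.exp_add, hI1, hI2]
        ring
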